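/- Let x : ℕ → ℚ be a sequence. For every n ≥ 1, the invert transform of x satisfies (𝒴x)(n) = Σ_{k=1}^{n} (k!/n!) · B_{n,k}(1!·x(1), 2!·x(2), 3!·x(3), …). -/

import Mathlib

/-- The invert transform of a sequence `x : ℕ → ℚ` (indexed from 1, `x 0` ignored):
`(𝒴x)(0) = 0` and `(𝒴x)(n) = x n + ∑_{j=1}^{n-1} x j * (𝒴x)(n-j)` for `n ≥ 1`. -/
def invert (x : ℕ → ℚ) : ℕ → ℚ
  | 0 => 0
  | n + 1 => x (n + 1) + ∑ j ∈ Finset.range n, x (j + 1) * invert x (n - j)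
  termination_by n => n
  decreasing_by omega

/-- The partial Bell polynomial `B_{n,k}(z₁, z₂, …)`, evaluated at a sequence of rationals
`z` (indexed from 1, `z 0` ignored): the sum over all finitely supported `α : ℕ → ℕ` with
`α 0 = 0`, `∑ i, α i = k` and `∑ i, i * α i = n` of `(n! / ∏ i, (α i)!) * ∏ i (z i / i!)^(α i)`. -/
def partialBell (n k : ℕ) (z : ℕ → ℚ) : ℚ :=
  ∑ α ∈ ((Finset.range (n + 1)).finsuppAntidiag k).filter
      (fun α => (∑ i ∈ Finset.range (n + 1), i * α i) = n ∧ α 0 = 0),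
    ((n.factorial : ℚ) / ∏ i ∈ Finset.range (n + 1), ((α i).factorial : ℚ)) *
      ∏ i ∈ Finset.range (n + 1), (z i / (i.factorial : ℚ)) ^ α i


open Finset

def A (n k : ℕ) : Finset (ℕ →₀ ℕ) :=
  ((Finset.range (n + 1)).finsuppAntidiag k).filter
      (fun α => (∑ i ∈ Finset.range (n + 1), i * α i) = n ∧ α 0 = 0)

lemma mem_A {n k : ℕ} {α : ℕ →₀ ℕ} :
    α ∈ A n k ↔ (∑ i ∈ range (n+1), α i) = k ∧ α.support ⊆ range (n+1) ∧
      (∑ i ∈ range (n+1), i * α i) = n ∧ α 0 = 0 := by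
  simp [A, Finset.mem_filter, Finset.mem_finsuppAntidiag, and_assoc, Finset.sum]

noncomputable def w (x : ℕ → ℚ) (n k : ℕ) (α : ℕ →₀ ℕ) : ℚ :=
  ((k.factorial : ℚ) / ∏ i ∈ range (n + 1), ((α i).factorial : ℚ)) *
    ∏ i ∈ range (n + 1), (x i) ^ α i

noncomputable def g (x : ℕ → ℚ) (n k : ℕ) : ℚ := ∑ α ∈ A n k, w x n k α

lemma prod_ext {m n : ℕ} (α : ℕ →₀ ℕ) (hs : α.support ⊆ range (m+1)) (hmn : m ≤ n)
    (F : ℕ → ℚ) (hF : F 0 = 1) :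
    ∏ i ∈ range (n+1), F (α i) = ∏ i ∈ range (m+1), F (α i) :=
  (Finset.prod_subset (range_subset_range.2 (by omega)) (fun i _ hi => by
    rw [Finsupp.notMem_support_iff.1 (fun h => hi (hs h)), hF])).symm

lemma sum_ext {m n : ℕ} (α : ℕ →₀ ℕ) (hs : α.support ⊆ range (m+1)) (hmn : m ≤ n)
    (F : ℕ → ℕ → ℕ) (hF : ∀ i, F i 0 = 0) :
    ∑ i ∈ range (n+1), F i (α i) = ∑ i ∈ range (m+1), F i (α i) :=
  (Finset.sum_subset (range_subset_range.2 (by omega)) (fun i _ hi => by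
    rw [Finsupp.notMem_support_iff.1 (fun h => hi (hs h)), hF])).symm

lemma A_empty {m k : ℕ} (h : m < k) : A m k = ∅ := by
  rw [Finset.eq_empty_iff_forall_notMem]
  intro α hα
  obtain ⟨h1, h2, h3, h4⟩ := mem_A.1 hα
  have : (∑ i ∈ range (m+1), α i) ≤ ∑ i ∈ range (m+1), i * α i := by
    refine Finset.sum_le_sum fun i hi => ?_
    rcases Nat.eq_zero_or_pos i with rfl | hi1
    · simp [h4]
    · exact Nat.le_mul_of_pos_left _ hi1
  omega

lemma g_lt {x : ℕ → ℚ} {m k : ℕ} (h : m < k) : g x m k = 0 := by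
  simp [g, A_empty h]

lemma g_pos_zero {x : ℕ → ℚ} {m : ℕ} (h : 1 ≤ m) : g x m 0 = 0 := by
  have : A m 0 = ∅ := by
    rw [Finset.eq_empty_iff_forall_notMem]
    intro α hα
    obtain ⟨h1, h2, h3, h4⟩ := mem_A.1 hα
    have hz : ∀ i ∈ range (m+1), α i = 0 := by
      intro i hi
      exact (Finset.sum_eq_zero_iff.1 h1) i hi
    rw [Finset.sum_congr rfl (fun i hi => by rw [hz i hi, Nat.mul_zero])] at h3
    simp at h3; omega
  simp [g, this]

lemma g_zero_zero {x : ℕ → ℚ} : g x 0 0 = 1 := by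
  have : A 0 0 = {0} := by
    rw [A, Finset.finsuppAntidiag_zero]
    rw [Finset.filter_singleton]
    simp
  simp [g, this, w]

lemma prod_ext2 {m n : ℕ} (α : ℕ →₀ ℕ) (hs : α.support ⊆ range (m+1)) (hmn : m ≤ n)
    (F : ℕ → ℕ → ℚ) (hF : ∀ i, F i 0 = 1) :
    ∏ i ∈ range (n+1), F i (α i) = ∏ i ∈ range (m+1), F i (α i) :=
  (Finset.prod_subset (range_subset_range.2 (by omega)) (fun i _ hi => by
    rw [Finsupp.notMem_support_iff.1 (fun h => hi (hs h)), hF])).symm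

lemma single_term_le {n : ℕ} (α : ℕ →₀ ℕ) (h3 : ∑ i ∈ range (n+1), i * α i = n)
    {j : ℕ} (hj : j ∈ range (n+1)) : j * α j ≤ n := by
  rw [← h3]
  exact Finset.single_le_sum (f := fun i => i * α i) (fun i _ => Nat.zero_le _) hj

lemma g_rec (x : ℕ → ℚ) (n k : ℕ) (hn : 1 ≤ n) (hk : 1 ≤ k) :
    g x n k = ∑ j ∈ Icc 1 n, x j * g x (n - j) (k - 1) := by
  classical
  have hins : range (n+1) = insert 0 (Icc 1 n) := by
    ext i; simp only [Finset.mem_range, Finset.mem_Icc, Finset.mem_insert]; omega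
  -- Step 1: rewrite each weight as a sum over j
  have step1 : g x n k = ∑ α ∈ A n k, ∑ j ∈ Icc 1 n,
      (α j : ℚ) * (((k-1).factorial : ℚ) / (∏ i ∈ range (n+1), ((α i).factorial : ℚ)) *
        ∏ i ∈ range (n+1), (x i) ^ α i) := by
    rw [g]
    refine Finset.sum_congr rfl fun α hα => ?_
    obtain ⟨h1, h2, h3, h4⟩ := mem_A.1 hα
    have hsum : ∑ j ∈ Icc 1 n, α j = k := by
      rw [hins, Finset.sum_insert (by simp), h4, Nat.zero_add] at h1
      exact h1
    have hkfac : (k.factorial : ℚ)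
        = (∑ j ∈ Icc 1 n, (α j : ℚ)) * ((k-1).factorial : ℚ) := by
      rw [← Nat.cast_sum, hsum, ← Nat.cast_mul, Nat.mul_factorial_pred (by omega)]
    rw [w, hkfac, Finset.sum_mul, Finset.sum_div, Finset.sum_mul]
    exact Finset.sum_congr rfl fun j _ => by ring
  rw [step1, Finset.sum_comm]
  refine Finset.sum_congr rfl fun j hj => ?_
  obtain ⟨hj1, hjn⟩ := Finset.mem_Icc.1 hj
  have hjr : j ∈ range (n+1) := Finset.mem_range.2 (by omega)
  -- Step 2: drop the α with α j = 0
  rw [← Finset.sum_filter_of_ne (p := fun α => α j ≠ 0)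
    (fun α _ h => by intro h0; exact h (by rw [h0]; push_cast; ring))]
  rw [g, Finset.mul_sum]
  -- Step 3: bijection
  refine (Finset.sum_nbij' (i := fun α' => α' + Finsupp.single j 1)
    (j := fun α => α - Finsupp.single j 1) ?_ ?_ ?_ ?_ ?_).symm
  · -- forward membership
    intro α' hα'
    obtain ⟨h1, h2, h3, h4⟩ := mem_A.1 hα'
    have hje : ((α' + Finsupp.single j 1 : ℕ →₀ ℕ)) j = α' j + 1 := by
      rw [Finsupp.add_apply, Finsupp.single_eq_same]
    refine Finset.mem_filter.2 ⟨mem_A.2 ⟨?_, ?_, ?_, ?_⟩, by rw [hje]; omega⟩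
    · -- sum = k
      have hext : ∑ i ∈ range (n+1), α' i = k - 1 := by
        rw [sum_ext (n := n) α' h2 (by omega) (fun _ m => m) (fun _ => rfl)]; exact h1
      rw [Finset.sum_congr rfl (fun i _ => Finsupp.add_apply α' _ i),
        Finset.sum_add_distrib, hext]
      have : ∑ i ∈ range (n+1), (Finsupp.single j 1) i = 1 := by
        rw [Finset.sum_congr rfl (fun i _ => Finsupp.single_apply),
          Finset.sum_ite_eq (range (n+1)) j (fun _ => 1), if_pos hjr]
      rw [this]; omega
    · -- support
      intro i hi
      rcases (Finsupp.support_add hi : i ∈ α'.support ∪ (Finsupp.single j 1).support)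
        |> Finset.mem_union.1 with h | h
      · exact Finset.mem_range.2 (by have := Finset.mem_range.1 (h2 h); omega)
      · have := Finsupp.support_single_subset h
        simp only [Finset.mem_singleton] at this
        exact Finset.mem_range.2 (by omega)
    · -- weighted sum = n
      have hext : ∑ i ∈ range (n+1), i * α' i = n - j := by
        rw [sum_ext (n := n) α' h2 (by omega) (fun i m => i * m) (fun _ => Nat.mul_zero _)]
        exact h3
      rw [Finset.sum_congr rfl (fun i _ => by
        rw [Finsupp.add_apply, Nat.mul_add]), Finset.sum_add_distrib, hext]
      have : ∑ i ∈ range (n+1), i * (Finsupp.single j 1) i = j := by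
        rw [Finset.sum_congr rfl (fun i _ => by
          rw [Finsupp.single_apply, mul_ite, Nat.mul_one, Nat.mul_zero]),
          Finset.sum_ite_eq (range (n+1)) j (fun i => i), if_pos hjr]
      rw [this]; omega
    · rw [Finsupp.add_apply, h4,
        Finsupp.single_apply_eq_zero.2 (fun h => absurd h.symm (by omega))]
      rfl
  · -- backward membership
    intro α hα
    obtain ⟨hαA, hαj⟩ := Finset.mem_filter.1 hα
    obtain ⟨h1, h2, h3, h4⟩ := mem_A.1 hαA
    have hαj1 : 1 ≤ α j := Nat.one_le_iff_ne_zero.2 hαj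
    have hble : ∀ i, (Finsupp.single j 1) i ≤ α i := by
      intro i
      rcases eq_or_ne j i with rfl | hne
      · rw [Finsupp.single_eq_same]; exact hαj1
      · rw [Finsupp.single_apply, if_neg hne]; exact Nat.zero_le _
    have hβa : ∀ i, ((α - Finsupp.single j 1 : ℕ →₀ ℕ)) i = α i - (Finsupp.single j 1) i :=
      fun i => rfl
    have hsupp : (α - Finsupp.single j 1).support ⊆ range (n - j + 1) := by
      intro i hi
      have hβi : ((α - Finsupp.single j 1 : ℕ →₀ ℕ)) i ≠ 0 := Finsupp.mem_support_iff.1 hi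
      rw [hβa, Finsupp.single_apply] at hβi
      rcases eq_or_ne j i with rfl | hne
      · rw [if_pos rfl] at hβi
        have h2j : j * α j ≤ n := single_term_le α h3 hjr
        have hαj2 : 2 ≤ α j := by omega
        have : j * 2 ≤ j * α j := Nat.mul_le_mul_left j hαj2
        exact Finset.mem_range.2 (by omega)
      · rw [if_neg hne, Nat.sub_zero] at hβi
        have hi1 : 1 ≤ α i := Nat.one_le_iff_ne_zero.2 hβi
        have hiRange : i ∈ range (n+1) := h2 (Finsupp.mem_support_iff.2 hβi)
        have hpair : i * α i + j * α j ≤ n := by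
          rw [← h3]
          calc i * α i + j * α j = ∑ m ∈ ({i, j} : Finset ℕ), m * α m := by
                rw [Finset.sum_pair (fun h => hne h.symm)]
            _ ≤ ∑ m ∈ range (n+1), m * α m := by
                refine Finset.sum_le_sum_of_subset ?_
                intro m hm
                rcases Finset.mem_insert.1 hm with rfl | hm
                · exact hiRange
                · rw [Finset.mem_singleton.1 hm]; exact hjr
        have hii : i ≤ i * α i := Nat.le_mul_of_pos_right i hi1
        have hjj : j ≤ j * α j := Nat.le_mul_of_pos_right j hαj1
        exact Finset.mem_range.2 (by omega)
    have hsum1 : ∑ i ∈ range (n+1), ((α - Finsupp.single j 1 : ℕ →₀ ℕ)) i = k - 1 := by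
      rw [Finset.sum_congr rfl (fun i _ => hβa i),
        Finset.sum_tsub_distrib _ (fun i _ => hble i), h1]
      have : ∑ i ∈ range (n+1), (Finsupp.single j 1) i = 1 := by
        rw [Finset.sum_congr rfl (fun i _ => Finsupp.single_apply),
          Finset.sum_ite_eq (range (n+1)) j (fun _ => 1), if_pos hjr]
      rw [this]
    have hsum2 : ∑ i ∈ range (n+1), i * ((α - Finsupp.single j 1 : ℕ →₀ ℕ)) i = n - j := by
      rw [Finset.sum_congr rfl (fun i _ => by rw [hβa, Nat.mul_sub]),
        Finset.sum_tsub_distrib _ (fun i _ => Nat.mul_le_mul_left i (hble i)), h3]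
      have : ∑ i ∈ range (n+1), i * (Finsupp.single j 1) i = j := by
        rw [Finset.sum_congr rfl (fun i _ => by
          rw [Finsupp.single_apply, mul_ite, Nat.mul_one, Nat.mul_zero]),
          Finset.sum_ite_eq (range (n+1)) j (fun i => i), if_pos hjr]
      rw [this]
    refine mem_A.2 ⟨?_, hsupp, ?_, ?_⟩
    · rw [← sum_ext (n := n) _ hsupp (by omega) (fun _ m => m) (fun _ => rfl)]
      exact hsum1
    · rw [← sum_ext (n := n) _ hsupp (by omega) (fun i m => i * m) (fun _ => Nat.mul_zero _)]
      exact hsum2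
    · rw [hβa, h4]
      exact Nat.zero_sub _
  · -- left inverse
    intro α' _
    exact add_tsub_cancel_right _ _
  · -- right inverse
    intro α hα
    obtain ⟨hαA, hαj⟩ := Finset.mem_filter.1 hα
    exact tsub_add_cancel_of_le (Finsupp.single_le_iff.2 (Nat.one_le_iff_ne_zero.2 hαj))
  · -- value equality
    intro α' hα'
    obtain ⟨h1, h2, h3, h4⟩ := mem_A.1 hα'
    have hγj : ((α' + Finsupp.single j 1 : ℕ →₀ ℕ)) j = α' j + 1 := by
      rw [Finsupp.add_apply, Finsupp.single_eq_same]
    have hγi : ∀ i, i ≠ j → ((α' + Finsupp.single j 1 : ℕ →₀ ℕ)) i = α' i := fun i hi => by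
      rw [Finsupp.add_apply, Finsupp.single_apply, if_neg (fun h => hi h.symm), Nat.add_zero]
    -- extend products of α' to range (n+1)
    have hwα' : w x (n-j) (k-1) α'
        = (((k-1).factorial : ℚ) / ∏ i ∈ range (n+1), ((α' i).factorial : ℚ)) *
          ∏ i ∈ range (n+1), (x i) ^ α' i := by
      rw [w, prod_ext2 (n := n) α' h2 (by omega) (fun i m => ((m.factorial : ℕ) : ℚ))
          (fun _ => by norm_num),
        prod_ext2 (n := n) α' h2 (by omega) (fun i m => (x i) ^ m) (fun _ => pow_zero _)]
    rw [hwα']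
    have hPγ : ∏ i ∈ range (n+1), (((α' + Finsupp.single j 1 : ℕ →₀ ℕ) i).factorial : ℚ)
        = ((α' j : ℚ) + 1) * ∏ i ∈ range (n+1), ((α' i).factorial : ℚ) := by
      rw [← Finset.mul_prod_erase (range (n+1))
          (fun i => (((α' + Finsupp.single j 1 : ℕ →₀ ℕ) i).factorial : ℚ)) hjr,
        ← Finset.mul_prod_erase (range (n+1)) (fun i => ((α' i).factorial : ℚ)) hjr,
        hγj, Finset.prod_congr rfl (fun i hi => by
          rw [hγi i (Finset.ne_of_mem_erase hi)]), Nat.factorial_succ]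
      push_cast
      ring
    have hQγ : ∏ i ∈ range (n+1), (x i) ^ ((α' + Finsupp.single j 1 : ℕ →₀ ℕ) i)
        = x j * ∏ i ∈ range (n+1), (x i) ^ α' i := by
      rw [← Finset.mul_prod_erase (range (n+1))
          (fun i => (x i) ^ ((α' + Finsupp.single j 1 : ℕ →₀ ℕ) i)) hjr,
        ← Finset.mul_prod_erase (range (n+1)) (fun i => (x i) ^ α' i) hjr,
        hγj, Finset.prod_congr rfl (fun i hi => by
          rw [hγi i (Finset.ne_of_mem_erase hi)]), pow_succ]
      ring
    have hne1 : ((α' j : ℚ) + 1) ≠ 0 := by positivity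
    have hne2 : (∏ i ∈ range (n+1), ((α' i).factorial : ℚ)) ≠ 0 :=
      Finset.prod_ne_zero_iff.2 fun i _ => Nat.cast_ne_zero.2 (Nat.factorial_ne_zero _)
    rw [hPγ, hQγ, hγj]
    push_cast
    field_simp

lemma sum_Icc_pred (f : ℕ → ℚ) (m : ℕ) :
    ∑ k ∈ Icc 1 (m+1), f (k-1) = ∑ k ∈ range (m+1), f k := by
  refine Finset.sum_nbij' (i := fun k => k - 1) (j := fun k => k + 1) ?_ ?_ ?_ ?_ ?_
  · intro a ha; have := Finset.mem_Icc.1 ha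
    exact Finset.mem_range.2 (show a - 1 < m + 1 by omega)
  · intro a ha; have := Finset.mem_range.1 ha
    exact Finset.mem_Icc.2 (show 1 ≤ a + 1 ∧ a + 1 ≤ m + 1 by omega)
  · intro a ha; have := Finset.mem_Icc.1 ha
    show a - 1 + 1 = a; omega
  · intro a ha
    show a + 1 - 1 = a; omega
  · intro a ha; rfl

lemma invert_eq (x : ℕ → ℚ) : ∀ n, 1 ≤ n → invert x n = ∑ k ∈ Icc 1 n, g x n k := by
  intro n
  induction n using Nat.strong_induction_on with
  | _ n IH =>
    intro hn
    obtain ⟨m, rfl⟩ : ∃ m, n = m + 1 := ⟨n - 1, by omega⟩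
    have hRHS : ∑ k ∈ Icc 1 (m+1), g x (m+1) k
        = (∑ j ∈ Icc 1 m, x j * ∑ k ∈ Icc 1 (m+1-j), g x (m+1-j) k) + x (m+1) := by
      calc ∑ k ∈ Icc 1 (m+1), g x (m+1) k
          = ∑ k ∈ Icc 1 (m+1), ∑ j ∈ Icc 1 (m+1), x j * g x (m+1-j) (k-1) := by
            refine Finset.sum_congr rfl fun k hk => ?_
            exact g_rec x (m+1) k (by omega) (Finset.mem_Icc.1 hk).1
        _ = ∑ j ∈ Icc 1 (m+1), ∑ k ∈ Icc 1 (m+1), x j * g x (m+1-j) (k-1) :=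
            Finset.sum_comm
        _ = ∑ j ∈ Icc 1 (m+1), x j * ∑ k ∈ range (m+1), g x (m+1-j) k := by
            refine Finset.sum_congr rfl fun j hj => ?_
            rw [← Finset.mul_sum, sum_Icc_pred]
        _ = ∑ j ∈ Icc 1 (m+1), x j *
              ((∑ k ∈ range m, g x (m+1-j) (k+1)) + g x (m+1-j) 0) := by
            refine Finset.sum_congr rfl fun j hj => ?_
            rw [Finset.sum_range_succ']
        _ = (∑ j ∈ Icc 1 m, x j * ((∑ k ∈ range m, g x (m+1-j) (k+1)) + g x (m+1-j) 0))
              + x (m+1) * ((∑ k ∈ range m, g x (m+1-(m+1)) (k+1)) + g x (m+1-(m+1)) 0) :=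
            Finset.sum_Icc_succ_top (by omega) _
        _ = (∑ j ∈ Icc 1 m, x j * ∑ k ∈ Icc 1 (m+1-j), g x (m+1-j) k) + x (m+1) := by
            congr 1
            · refine Finset.sum_congr rfl fun j hj => ?_
              obtain ⟨hj1, hjm⟩ := Finset.mem_Icc.1 hj
              have hm' : 1 ≤ m+1-j := by omega
              rw [g_pos_zero hm', add_zero]
              congr 1
              have h1 : ∑ k ∈ Icc 1 (m+1-j), g x (m+1-j) k
                  = ∑ k ∈ Icc 1 m, g x (m+1-j) k :=
                Finset.sum_subset (Finset.Icc_subset_Icc_right (by omega))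
                  (fun k hk hk' => g_lt (by
                    have h5 := Finset.mem_Icc.1 hk
                    have h6 : ¬ (1 ≤ k ∧ k ≤ m+1-j) := fun h => hk' (Finset.mem_Icc.2 h)
                    omega))
              have h2 : ∑ k ∈ Icc 1 m, g x (m+1-j) k
                  = ∑ k ∈ range m, g x (m+1-j) (k+1) := by
                rw [← Finset.Ico_add_one_right_eq_Icc, Finset.sum_Ico_eq_sum_range,
                  (show m + 1 - 1 = m by omega)]
                exact Finset.sum_congr rfl fun k _ => by rw [Nat.add_comm 1 k]
              rw [h1, h2]
            · have hz : ∑ k ∈ range m, g x (m+1-(m+1)) (k+1) = 0 := by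
                simp only [Nat.sub_self]
                exact Finset.sum_eq_zero fun k _ => g_lt (Nat.succ_pos k)
              rw [hz, Nat.sub_self, g_zero_zero, zero_add, mul_one]
    rw [hRHS, invert]
    rw [add_comm]
    congr 1
    rw [← Finset.Ico_add_one_right_eq_Icc, Finset.sum_Ico_eq_sum_range,
      (show m + 1 - 1 = m by omega)]
    refine Finset.sum_congr rfl fun i hi => ?_
    have hi' : i < m := Finset.mem_range.1 hi
    rw [Nat.add_comm 1 i, (show m + 1 - (i + 1) = m - i by omega),
      IH (m - i) (by omega) (by omega)]

open Finset

lemma prodP_ne_zero (α : ℕ →₀ ℕ) (n : ℕ) :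
    (∏ i ∈ range (n + 1), ((α i).factorial : ℚ)) ≠ 0 :=
  Finset.prod_ne_zero_iff.2 fun i _ => Nat.cast_ne_zero.2 (Nat.factorial_ne_zero _)

lemma link (x : ℕ → ℚ) (n k : ℕ) :
    ((k.factorial : ℚ) / (n.factorial : ℚ)) *
      partialBell n k (fun i => (i.factorial : ℚ) * x i) = g x n k := by
  rw [partialBell, g, Finset.mul_sum]
  refine Finset.sum_congr rfl fun α hα => ?_
  rw [w]
  have hQ : ∏ i ∈ range (n+1), (((i.factorial : ℚ) * x i) / (i.factorial : ℚ)) ^ α i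
      = ∏ i ∈ range (n+1), (x i) ^ α i := by
    refine Finset.prod_congr rfl fun i _ => ?_
    rw [mul_div_cancel_left₀ _ (Nat.cast_ne_zero.2 (Nat.factorial_ne_zero i) : (i.factorial:ℚ) ≠ 0)]
  rw [hQ]
  have hn : (n.factorial : ℚ) ≠ 0 := Nat.cast_ne_zero.2 (Nat.factorial_ne_zero n)
  have hP := prodP_ne_zero α n
  field_simp


/-- For every `n ≥ 1`, `(𝒴x)(n) = ∑_{k=1}^n (k!/n!) · B_{n,k}(1!·x 1, 2!·x 2, …)`. -/
theorem stmt_3 (x : ℕ → ℚ) (n : ℕ) (hn : 1 ≤ n) :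
    invert x n
      = ∑ k ∈ Finset.Icc 1 n,
          ((k.factorial : ℚ) / (n.factorial : ℚ)) *
            partialBell n k (fun i => (i.factorial : ℚ) * x i) := by
  rw [invert_eq x n hn]
  exact Finset.sum_congr rfl fun k _ => (link x n k).symm
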